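/- For n ≥ 2, ∑_{k=1}^{n-1} ∑ over compositions (a_1,…,a_k) of n with a_1 ≠ 1 of 4(k−1)·n!/(a_1!⋯a_k!) equals ∑_{k=1}^{n} 4·(k! − (k−1)!)·(k·S(n,k) − n·S(n−1,k−1)). -/

import Mathlib

open Finset

/-- Stirling numbers of the second kind. -/
def stirling : ℕ → ℕ → ℕ
  | 0, 0 => 1
  | 0, _ + 1 => 0
  | _ + 1, 0 => 0
  | n + 1, k + 1 => (k + 1) * stirling n (k + 1) + stirling n k

/-- The ordered Bell (Fubini) numbers. -/
def fubini (n : ℕ) : ℕ := ∑ k ∈ Finset.range (n + 1), k.factorial * stirling n k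

/-- Eulerian numbers `A(n,k)`: permutations of `[n]` with `k` descents. -/
def eulerian : ℕ → ℕ → ℕ
  | 0, 0 => 1
  | 0, _ + 1 => 0
  | _ + 1, 0 => 1
  | n + 1, k + 1 => (n + 1 - (k + 1)) * eulerian n k + (k + 2) * eulerian n (k + 1)

/-- `L` is an ordered set partition of `Fin n`: a list of nonempty, pairwise
disjoint blocks whose union is everything. -/
def IsOSP {n : ℕ} (L : List (Finset (Fin n))) : Prop :=
  (∀ B ∈ L, B.Nonempty) ∧ L.Pairwise Disjoint ∧ ∀ x : Fin n, ∃ B ∈ L, x ∈ B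

/-- ordered surjection count -/
def Fs (n k : ℕ) : ℕ := k.factorial * stirling n k

lemma Fs_succ (m k : ℕ) : Fs (m + 1) k = k * Fs m k + k * Fs m (k - 1) := by
  cases k with
  | zero => simp [Fs, stirling]
  | succ j =>
    simp only [Fs, stirling, Nat.succ_sub_one, Nat.factorial_succ]
    ring

lemma multinomial_cons' {k : ℕ} (a : ℕ) (d : Fin k → ℕ) :
    Nat.multinomial Finset.univ (Fin.cons a d) =
      (a + ∑ i, d i).choose a * Nat.multinomial Finset.univ d := by
  have hpos : 0 < a.factorial * ∏ i, (d i).factorial :=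
    Nat.mul_pos a.factorial_pos (Finset.prod_pos fun i _ => (d i).factorial_pos)
  apply Nat.eq_of_mul_eq_mul_left hpos
  have h1 : (a.factorial * ∏ i, (d i).factorial) *
      Nat.multinomial Finset.univ (Fin.cons a d) = (a + ∑ i, d i).factorial := by
    have := Nat.multinomial_spec (Finset.univ : Finset (Fin (k+1))) (Fin.cons a d)
    simpa [Fin.prod_univ_succ, Fin.sum_univ_succ] using this
  rw [h1]
  have h2 := Nat.multinomial_spec (Finset.univ : Finset (Fin k)) d
  have hc := Nat.choose_mul_factorial_mul_factorial (Nat.le_add_right a (∑ i, d i))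
  rw [Nat.add_sub_cancel_left] at hc
  calc (a + ∑ i, d i).factorial
      = (a + ∑ i, d i).choose a * a.factorial * (∑ i, d i).factorial := hc.symm
    _ = (a.factorial * ∏ i, (d i).factorial) *
        ((a + ∑ i, d i).choose a * Nat.multinomial Finset.univ d) := by
        rw [← h2]; ring

lemma sum_adt_succ {M : Type*} [AddCommMonoid M] (k n : ℕ) (F : (Fin (k+1) → ℕ) → M) :
    ∑ c ∈ Finset.Nat.antidiagonalTuple (k+1) n, F c
      = ∑ p ∈ Finset.HasAntidiagonal.antidiagonal n, ∑ d ∈ Finset.Nat.antidiagonalTuple k p.2,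
          F (Fin.cons p.1 d) := by
  rw [Finset.sum_sigma']
  refine Finset.sum_nbij' (fun c => ⟨(c 0, ∑ i : Fin k, c i.succ), Fin.tail c⟩)
    (fun p => Fin.cons p.1.1 p.2) ?_ ?_ ?_ ?_ ?_
  · intro c hc
    rw [Finset.Nat.mem_antidiagonalTuple, Fin.sum_univ_succ] at hc
    simp only [Finset.mem_sigma, Finset.Nat.mem_antidiagonalTuple,
      Finset.HasAntidiagonal.mem_antidiagonal]
    exact ⟨hc, rfl⟩
  · intro p hp
    simp only [Finset.mem_sigma, Finset.Nat.mem_antidiagonalTuple,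
      Finset.HasAntidiagonal.mem_antidiagonal] at hp
    rw [Finset.Nat.mem_antidiagonalTuple, Fin.sum_univ_succ]
    simp only [Fin.cons_zero, Fin.cons_succ]
    rw [hp.2]
    exact hp.1
  · intro c _; exact Fin.cons_self_tail c
  · rintro ⟨⟨a, b⟩, d⟩ hp
    simp only [Finset.mem_sigma, Finset.Nat.mem_antidiagonalTuple] at hp
    have hb := hp.2
    subst hb
    simp [Fin.cons_zero, Fin.cons_succ, Fin.tail_cons]
  · intro c _
    rw [Fin.cons_self_tail]

def fsum (n k : ℕ) : ℕ :=
  ∑ c ∈ (Finset.Nat.antidiagonalTuple k n).filter (fun c => ∀ i, c i ≠ 0),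
    Nat.multinomial Finset.univ c

lemma fsum_succ (n k : ℕ) :
    fsum n (k+1) = ∑ i ∈ range (n+1),
      if i = 0 then 0 else n.choose i * fsum (n - i) k := by
  rw [fsum, Finset.sum_filter, sum_adt_succ,
    Finset.Nat.sum_antidiagonal_eq_sum_range_succ_mk]
  refine Finset.sum_congr rfl fun i hi => ?_
  rw [Finset.mem_range] at hi
  have hcond : ∀ d : Fin k → ℕ,
      (∀ j : Fin (k+1), (Fin.cons i d : Fin (k+1) → ℕ) j ≠ 0) ↔ (i ≠ 0 ∧ ∀ j, d j ≠ 0) := by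
    intro d
    rw [Fin.forall_fin_succ]
    simp [Fin.cons_zero, Fin.cons_succ]
  by_cases h0 : i = 0
  · subst h0
    simp only [if_pos rfl]
    refine Finset.sum_eq_zero fun d _ => ?_
    have hnc : ¬ (∀ j : Fin (k+1), (Fin.cons 0 d : Fin (k+1) → ℕ) j ≠ 0) := by
      rw [hcond d]; simp
    rw [if_neg hnc]
  · rw [if_neg h0, fsum, Finset.sum_filter, Finset.mul_sum]
    refine Finset.sum_congr rfl fun d hd => ?_
    rw [Finset.Nat.mem_antidiagonalTuple] at hd
    simp only [hcond d]
    by_cases hp : ∀ j, d j ≠ 0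
    · rw [if_pos ⟨h0, hp⟩, if_pos hp, multinomial_cons', hd]
      congr 2
      omega
    · rw [if_neg (fun h => hp h.2), if_neg hp, mul_zero]

lemma G_main : ∀ n k : ℕ,
    (∑ i ∈ range (n+1), if i = 0 then 0 else n.choose i * Fs (n - i) k)
      = Fs n (k+1) := by
  intro n
  induction n with
  | zero => intro k; simp [Fs, stirling]
  | succ n ih =>
    intro k
    rw [Finset.sum_range_succ']
    simp only [if_pos rfl, add_zero, Nat.succ_sub_succ]
    have hif : ∀ i, (if i + 1 = 0 then 0 else (n+1).choose (i+1) * Fs (n - i) k)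
        = (n.choose i + n.choose (i+1)) * Fs (n - i) k := by
      intro i; rw [if_neg (Nat.succ_ne_zero i), Nat.choose_succ_succ]
    simp only [hif, add_mul, Finset.sum_add_distrib]
    have hA : ∑ i ∈ range (n+1), n.choose i * Fs (n - i) k
        = Fs n (k+1) + Fs n k := by
      have : ∀ i, n.choose i * Fs (n - i) k
          = (if i = 0 then 0 else n.choose i * Fs (n - i) k)
            + (if i = 0 then n.choose i * Fs (n - i) k else 0) := by
        intro i; by_cases h : i = 0 <;> simp [h]
      rw [Finset.sum_congr rfl fun i _ => this i, Finset.sum_add_distrib, ih k,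
        Finset.sum_ite_eq' (range (n+1)) 0]
      simp
    have hGshift : ∀ k', ∑ i ∈ range n, n.choose (i+1) * Fs (n - (i+1)) k'
        = Fs n (k'+1) := by
      intro k'
      have := ih k'
      rw [Finset.sum_range_succ'] at this
      simpa using this
    have hB : ∑ i ∈ range (n+1), n.choose (i+1) * Fs (n - i) k
        = k * Fs n (k+1) + k * Fs n k := by
      rw [Finset.sum_range_succ, Nat.choose_succ_self, zero_mul, add_zero]
      have : ∀ i ∈ range n, n.choose (i+1) * Fs (n - i) k
          = k * (n.choose (i+1) * Fs (n - (i+1)) k)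
            + k * (n.choose (i+1) * Fs (n - (i+1)) (k-1)) := by
        intro i hi
        rw [Finset.mem_range] at hi
        have hni : n - i = (n - (i+1)) + 1 := by omega
        rw [hni, Fs_succ]
        ring
      rw [Finset.sum_congr rfl this, Finset.sum_add_distrib, ← Finset.mul_sum,
        ← Finset.mul_sum, hGshift k, hGshift (k-1)]
      have hk : k * Fs n (k - 1 + 1) = k * Fs n k := by
        cases k with
        | zero => simp
        | succ j => rfl
      rw [hk]
    rw [hA, hB, Fs_succ n (k+1)]
    simp only [Nat.add_sub_cancel, reduceIte]
    ring

lemma fsum_eq : ∀ (k n : ℕ), fsum n k = Fs n k := by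
  intro k
  induction k with
  | zero =>
    intro n
    cases n with
    | zero =>
      rw [fsum, Finset.Nat.antidiagonalTuple_zero_zero]
      simp [Fs, stirling]
    | succ m =>
      rw [fsum, Finset.Nat.antidiagonalTuple_zero_succ]
      simp [Fs, stirling]
  | succ k ih =>
    intro n
    rw [fsum_succ, ← G_main n k]
    refine Finset.sum_congr rfl fun i _ => ?_
    rw [ih]

def gsum (n k : ℕ) : ℕ :=
  ∑ c ∈ (Finset.Nat.antidiagonalTuple k n).filter
    (fun c => (∀ i : Fin k, c i ≠ 0) ∧ ∀ i : Fin k, (i : ℕ) = 0 → c i ≠ 1),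
    Nat.multinomial Finset.univ c

lemma gsum_succ (n k : ℕ) :
    gsum n (k+1) = ∑ i ∈ range (n+1),
      if i = 0 ∨ i = 1 then 0 else n.choose i * fsum (n - i) k := by
  rw [gsum, Finset.sum_filter, sum_adt_succ,
    Finset.Nat.sum_antidiagonal_eq_sum_range_succ_mk]
  refine Finset.sum_congr rfl fun i hi => ?_
  rw [Finset.mem_range] at hi
  have hcond : ∀ d : Fin k → ℕ,
      ((∀ j : Fin (k+1), (Fin.cons i d : Fin (k+1) → ℕ) j ≠ 0) ∧
        ∀ j : Fin (k+1), (j : ℕ) = 0 → (Fin.cons i d : Fin (k+1) → ℕ) j ≠ 1)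
      ↔ ((i ≠ 0 ∧ i ≠ 1) ∧ ∀ j, d j ≠ 0) := by
    intro d
    rw [Fin.forall_fin_succ, Fin.forall_fin_succ (P := fun j => (j : ℕ) = 0 → _)]
    simp only [Fin.cons_zero, Fin.cons_succ, Fin.val_succ, Fin.val_zero]
    simp only [eq_self_iff_true, true_implies, Nat.succ_ne_zero, false_implies,
      forall_const, and_true, Nat.add_one_ne_zero, IsEmpty.forall_iff]
    tauto
  by_cases h01 : i = 0 ∨ i = 1
  · rw [if_pos h01]
    refine Finset.sum_eq_zero fun d _ => ?_
    have hnc : ¬ ((∀ j : Fin (k+1), (Fin.cons i d : Fin (k+1) → ℕ) j ≠ 0) ∧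
        ∀ j : Fin (k+1), (j : ℕ) = 0 → (Fin.cons i d : Fin (k+1) → ℕ) j ≠ 1) := by
      rw [hcond d]
      rintro ⟨⟨h0, h1⟩, -⟩
      tauto
    rw [if_neg hnc]
  · rw [if_neg h01]
    push_neg at h01
    rw [fsum, Finset.sum_filter, Finset.mul_sum]
    refine Finset.sum_congr rfl fun d hd => ?_
    rw [Finset.Nat.mem_antidiagonalTuple] at hd
    simp only [hcond d]
    by_cases hp : ∀ j, d j ≠ 0
    · rw [if_pos ⟨h01, hp⟩, if_pos hp, multinomial_cons', hd]
      congr 2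
      omega
    · rw [if_neg (fun h => hp h.2), if_neg hp, mul_zero]

lemma gsum_eval (n j : ℕ) (hn : 1 ≤ n) :
    gsum n (j+1) + n * Fs (n-1) j = Fs n (j+1) := by
  rw [← fsum_eq (j+1) n, ← fsum_eq j (n-1), gsum_succ, fsum_succ]
  have split : ∀ i ∈ range (n+1),
      (if i = 0 then 0 else n.choose i * fsum (n-i) j)
      = (if i = 0 ∨ i = 1 then 0 else n.choose i * fsum (n-i) j)
        + (if i = 1 then n.choose i * fsum (n-i) j else 0) := by
    intro i _
    by_cases h0 : i = 0
    · simp [h0]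
    · by_cases h1 : i = 1 <;> simp [h0, h1]
  rw [Finset.sum_congr rfl split, Finset.sum_add_distrib,
    Finset.sum_ite_eq' (range (n+1)) 1,
    if_pos (Finset.mem_range.mpr (by omega)), Nat.choose_one_right]

lemma stirling_eq_zero : ∀ {n k : ℕ}, n < k → stirling n k = 0 := by
  intro n
  induction n with
  | zero =>
    intro k h
    cases k with
    | zero => omega
    | succ k => rfl
  | succ n ih =>
    intro k h
    cases k with
    | zero => omega
    | succ k =>
      show (k+1) * stirling n (k+1) + stirling n k = 0
      rw [ih (by omega), ih (by omega)]
      simp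

lemma stirling_self : ∀ n : ℕ, stirling n n = 1 := by
  intro n
  induction n with
  | zero => rfl
  | succ n ih =>
    show (n+1) * stirling n (n+1) + stirling n n = 1
    rw [stirling_eq_zero (by omega), ih]
    simp

theorem composition_sum_eq_stirling_sum (n : ℕ) (hn : 2 ≤ n) :
    ((∑ k ∈ Finset.Icc 1 (n - 1),
        ∑ c ∈ (Finset.Nat.antidiagonalTuple k n).filter
          (fun c => (∀ i : Fin k, c i ≠ 0) ∧ ∀ i : Fin k, (i : ℕ) = 0 → c i ≠ 1),
          4 * (k - 1) * Nat.multinomial Finset.univ c : ℕ) : ℤ) =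
      ∑ k ∈ Finset.Icc 1 n,
        4 * ((k.factorial : ℤ) - (k - 1).factorial) *
          ((k : ℤ) * stirling n k - (n : ℤ) * stirling (n - 1) (k - 1)) := by
  have step1 : (∑ k ∈ Finset.Icc 1 (n - 1),
      ∑ c ∈ (Finset.Nat.antidiagonalTuple k n).filter
        (fun c => (∀ i : Fin k, c i ≠ 0) ∧ ∀ i : Fin k, (i : ℕ) = 0 → c i ≠ 1),
        4 * (k - 1) * Nat.multinomial Finset.univ c)
      = ∑ k ∈ Finset.Icc 1 (n - 1), 4 * (k - 1) * gsum n k :=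
    Finset.sum_congr rfl fun k _ => (Finset.mul_sum _ _ _).symm
  rw [step1, Nat.cast_sum]
  clear step1
  have step2 : ∀ k ∈ Finset.Icc 1 (n-1),
      ((4 * (k - 1) * gsum n k : ℕ) : ℤ)
      = 4 * ((k.factorial : ℤ) - (k - 1).factorial) *
          ((k : ℤ) * stirling n k - (n : ℤ) * stirling (n - 1) (k - 1)) := by
    intro k hk
    rw [Finset.mem_Icc] at hk
    obtain ⟨j, rfl⟩ : ∃ j, k = j + 1 := ⟨k - 1, by omega⟩
    have h := gsum_eval n j (by omega)
    have hz := congrArg (Nat.cast : ℕ → ℤ) h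
    push_cast [Fs] at hz
    have hg : (gsum n (j+1) : ℤ)
        = (j+1).factorial * stirling n (j+1)
          - n * (j.factorial * stirling (n-1) j) := by linarith
    simp only [Nat.add_sub_cancel]
    push_cast [hg, Nat.factorial_succ]
    ring
  rw [Finset.sum_congr rfl step2]
  clear step2
  obtain ⟨m, rfl⟩ : ∃ m, n = m + 1 := ⟨n - 1, by omega⟩
  rw [Finset.sum_Icc_succ_top (by omega : 1 ≤ m + 1)]
  simp only [Nat.add_sub_cancel]
  rw [stirling_self, stirling_self]
  push_cast
  ring
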